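/- Let L_1, L_2, L_3 be convex subsets of the graph group G_F with L_1 ∩ L_2 ≠ ∅. Then L_1L_3⁻¹ ∩ L_2L_3⁻¹ = (L_1 ∩ L_2)L_3⁻¹. -/

import Mathlib

open Pointwise

namespace GraphGroupPaper

/-- The set of commutator relators: `gᵢ` and `gⱼ` commute for every pair of distinct
`i, j` with `{i,j} ∉ F`. -/
def Rels (k : ℕ) (F : Set (Sym2 (Fin k))) : Set (FreeGroup (Fin k)) :=
  {w | ∃ i j : Fin k, i ≠ j ∧ s(i, j) ∉ F ∧
      w = FreeGroup.of i * FreeGroup.of j * (FreeGroup.of i)⁻¹ * (FreeGroup.of j)⁻¹}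

/-- The graph group `G_F` with generators `g₁, …, g_k` and relations `gᵢgⱼ = gⱼgᵢ`
for all distinct `i, j` with `{i,j} ∉ F`. -/
abbrev Grp (k : ℕ) (F : Set (Sym2 (Fin k))) := PresentedGroup (Rels k F)

/-- The generator `gᵢ` of the graph group. -/
def gen (k : ℕ) (F : Set (Sym2 (Fin k))) (i : Fin k) : Grp k F :=
  PresentedGroup.of i

/-- The group element corresponding to a symbol: `(i, true)` stands for `gᵢ`,
`(i, false)` stands for `gᵢ⁻¹`. -/
def sym (k : ℕ) (F : Set (Sym2 (Fin k))) (α : Fin k × Bool) : Grp k F :=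
  if α.2 then gen k F α.1 else (gen k F α.1)⁻¹

/-- The product of the word `l` of symbols, as an element of the graph group. -/
def wordProd (k : ℕ) (F : Set (Sym2 (Fin k))) (l : List (Fin k × Bool)) : Grp k F :=
  (l.map (sym k F)).prod

/-- `|x|` : the length of a shortest word in the symbols representing `x`. -/
noncomputable def len {k : ℕ} {F : Set (Sym2 (Fin k))} (x : Grp k F) : ℕ :=
  sInf {n | ∃ l : List (Fin k × Bool), wordProd k F l = x ∧ l.length = n}

/-- The partial order on `G_F`:  `x ≤ y` iff `|y| = |x| + |x⁻¹y|`. -/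
def le {k : ℕ} {F : Set (Sym2 (Fin k))} (x y : Grp k F) : Prop :=
  len y = len x + len (x⁻¹ * y)

/-- `m` is the meet `x ∧ y` (greatest lower bound w.r.t. `le`). -/
def IsMeet {k : ℕ} {F : Set (Sym2 (Fin k))} (x y m : Grp k F) : Prop :=
  le m x ∧ le m y ∧ ∀ w, le w x → le w y → le w m

/-- `j` is the (finite) join `x ∨ y` (least upper bound w.r.t. `le`);
`x ∨ y` is finite iff such a `j` exists. -/
def IsJoin {k : ℕ} {F : Set (Sym2 (Fin k))} (x y j : Grp k F) : Prop :=
  le x j ∧ le y j ∧ ∀ w, le x w → le y w → le j w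

/-- `j` is the (finite) join of the set `S`. -/
def IsJoinSet {k : ℕ} {F : Set (Sym2 (Fin k))} (S : Set (Grp k F)) (j : Grp k F) : Prop :=
  (∀ s ∈ S, le s j) ∧ ∀ w, (∀ s ∈ S, le s w) → le j w

/-- `y` is a segment of `a` if `a = x·y·z` for some `x, z`. -/
def Segment {k : ℕ} {F : Set (Sym2 (Fin k))} (y a : Grp k F) : Prop :=
  ∃ x z, a = x * y * z ∧ len a = len x + len y + len z

/-- The left-invariant metric `dist(x,y) = |x⁻¹y|`. -/
noncomputable def dist {k : ℕ} {F : Set (Sym2 (Fin k))} (x y : Grp k F) : ℕ :=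
  len (x⁻¹ * y)

/-- A nonempty set `L` is convex if `x, z ∈ L` and `dist(x,y) + dist(y,z) = dist(x,z)`
imply `y ∈ L`. -/
def ConvexSet {k : ℕ} {F : Set (Sym2 (Fin k))} (L : Set (Grp k F)) : Prop :=
  L.Nonempty ∧ ∀ x z y : Grp k F, x ∈ L → z ∈ L →
    dist x y + dist y z = dist x z → y ∈ L

/-- An ideal: nonempty, downward closed, and closed under finite joins. -/
def IdealSet {k : ℕ} {F : Set (Sym2 (Fin k))} (I : Set (Grp k F)) : Prop :=
  I.Nonempty ∧ (∀ x ∈ I, ∀ y, le y x → y ∈ I) ∧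
    (∀ x ∈ I, ∀ y ∈ I, ∀ j, IsJoin x y j → j ∈ I)

/-- `H` is closed if both `H` and `H⁻¹` are ideals. -/
def ClosedSet {k : ℕ} {F : Set (Sym2 (Fin k))} (H : Set (Grp k F)) : Prop :=
  IdealSet H ∧ IdealSet H⁻¹

/-- `m` is a minimal element of `S` w.r.t. `le`. -/
def MinimalIn {k : ℕ} {F : Set (Sym2 (Fin k))} (S : Set (Grp k F)) (m : Grp k F) : Prop :=
  m ∈ S ∧ ∀ x ∈ S, le x m → x = m

/-- `l` is a reduced (i.e. shortest) word representing `x`. -/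
def MinWord {k : ℕ} {F : Set (Sym2 (Fin k))} (x : Grp k F) (l : List (Fin k × Bool)) : Prop :=
  wordProd k F l = x ∧ l.length = len x

open Classical in
/-- `#_α(x)`: the number of occurrences of the symbol `α` (not counting `α⁻¹`)
in a reduced word representing `x`. -/
noncomputable def symCount {k : ℕ} {F : Set (Sym2 (Fin k))} (α : Fin k × Bool)
    (x : Grp k F) : ℕ :=
  if h : ∃ l, MinWord x l then h.choose.count α else 0

/-- The symbol `α` occurs in `x`. -/
def Occurs {k : ℕ} {F : Set (Sym2 (Fin k))} (α : Fin k × Bool) (x : Grp k F) : Prop :=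
  0 < symCount α x

/-- `α` is a maximal symbol of `x`, i.e. `xα⁻¹ ≤ x`. -/
def MaxSym {k : ℕ} {F : Set (Sym2 (Fin k))} (α : Fin k × Bool) (x : Grp k F) : Prop :=
  le (x * (sym k F α)⁻¹) x

/-- A peak: an element with precisely one maximal symbol. -/
def IsPeak {k : ℕ} {F : Set (Sym2 (Fin k))} (p : Grp k F) : Prop :=
  ∃! α : Fin k × Bool, MaxSym α p

/-- An `α`-peak: a peak whose unique maximal symbol is `α`. -/
def AlphaPeak {k : ℕ} {F : Set (Sym2 (Fin k))} (α : Fin k × Bool) (p : Grp k F) : Prop :=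
  MaxSym α p ∧ ∀ β, MaxSym β p → β = α

/-- The set of generator indices occurring in `b`. -/
def Support {k : ℕ} {F : Set (Sym2 (Fin k))} (b : Grp k F) : Set (Fin k) :=
  {i | Occurs (i, true) b ∨ Occurs (i, false) b}

/-- `b` is connected: the generators occurring in `b` induce a connected subgraph of
the graph `([k], F)`. -/
def Conn {k : ℕ} {F : Set (Sym2 (Fin k))} (b : Grp k F) : Prop :=
  (SimpleGraph.induce (Support b) (SimpleGraph.fromEdgeSet F)).Connected

/-- `b` is cyclically reduced: `b ∧ b⁻¹ = 1`. -/
def CycRed {k : ℕ} {F : Set (Sym2 (Fin k))} (b : Grp k F) : Prop :=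
  IsMeet b b⁻¹ 1

variable {k : ℕ} {F : Set (Sym2 (Fin k))}

/-- inverse of a letter -/
def linv (a : Fin k × Bool) : Fin k × Bool := (a.1, !a.2)

@[simp] lemma linv_linv (a : Fin k × Bool) : linv (linv a) = a := by
  simp [linv]

@[simp] lemma linv_fst (a : Fin k × Bool) : (linv a).1 = a.1 := rfl

lemma linv_ne (a : Fin k × Bool) : linv a ≠ a := by
  cases a with
  | mk i b => simp [linv, Prod.ext_iff]

/-- two letters commute -/
def lcomm (F : Set (Sym2 (Fin k))) (a b : Fin k × Bool) : Prop :=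
  a.1 ≠ b.1 ∧ s(a.1, b.1) ∉ F

lemma lcomm.symm {a b : Fin k × Bool} (h : lcomm F a b) : lcomm F b a :=
  ⟨Ne.symm h.1, by rw [Sym2.eq_swap]; exact h.2⟩

lemma lcomm_comm {a b : Fin k × Bool} : lcomm F a b ↔ lcomm F b a :=
  ⟨lcomm.symm, lcomm.symm⟩

@[simp] lemma lcomm_linv_left {a b : Fin k × Bool} : lcomm F (linv a) b ↔ lcomm F a b := by
  simp [lcomm]

@[simp] lemma lcomm_linv_right {a b : Fin k × Bool} : lcomm F a (linv b) ↔ lcomm F a b := by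
  simp [lcomm]

lemma lcomm_irrefl (a : Fin k × Bool) : ¬ lcomm F a a := fun h => h.1 rfl

lemma lcomm_ne {a b : Fin k × Bool} (h : lcomm F a b) : a ≠ b := by
  rintro rfl; exact h.1 rfl

lemma lcomm_ne_linv {a b : Fin k × Bool} (h : lcomm F a b) : a ≠ linv b := by
  rintro rfl; exact h.1 rfl

/-- a single swap of adjacent commuting letters -/
def Step (F : Set (Sym2 (Fin k))) (u v : List (Fin k × Bool)) : Prop :=
  ∃ (l₁ l₂ : List (Fin k × Bool)) (a b : Fin k × Bool),
    lcomm F a b ∧ u = l₁ ++ a :: b :: l₂ ∧ v = l₁ ++ b :: a :: l₂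

lemma Step.symm {u v : List (Fin k × Bool)} (h : Step F u v) : Step F v u := by
  obtain ⟨l₁, l₂, a, b, hc, hu, hv⟩ := h
  exact ⟨l₁, l₂, b, a, hc.symm, hv, hu⟩

/-- shuffle equivalence -/
def Shuf (F : Set (Sym2 (Fin k))) : List (Fin k × Bool) → List (Fin k × Bool) → Prop :=
  Relation.ReflTransGen (Step F)

lemma Shuf.refl (u : List (Fin k × Bool)) : Shuf F u u := Relation.ReflTransGen.refl

lemma Shuf.trans {u v w : List (Fin k × Bool)} (h : Shuf F u v) (h' : Shuf F v w) :
    Shuf F u w := Relation.ReflTransGen.trans h h'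

lemma Shuf.symm {u v : List (Fin k × Bool)} (h : Shuf F u v) : Shuf F v u := by
  induction h with
  | refl => exact Shuf.refl _
  | tail _ h2 ih => exact Shuf.trans (Relation.ReflTransGen.single h2.symm) ih

lemma Step.shuf {u v : List (Fin k × Bool)} (h : Step F u v) : Shuf F u v :=
  Relation.ReflTransGen.single h

lemma Step.cons {u v : List (Fin k × Bool)} (c : Fin k × Bool) (h : Step F u v) :
    Step F (c :: u) (c :: v) := by
  obtain ⟨l₁, l₂, a, b, hc, hu, hv⟩ := h
  exact ⟨c :: l₁, l₂, a, b, hc, by simp [hu], by simp [hv]⟩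

lemma Shuf.cons {u v : List (Fin k × Bool)} (c : Fin k × Bool) (h : Shuf F u v) :
    Shuf F (c :: u) (c :: v) := by
  induction h with
  | refl => exact Shuf.refl _
  | tail _ h2 ih => exact Shuf.trans ih (Step.shuf (h2.cons c))

lemma Step.append_left {u v : List (Fin k × Bool)} (p : List (Fin k × Bool)) (h : Step F u v) :
    Step F (p ++ u) (p ++ v) := by
  obtain ⟨l₁, l₂, a, b, hc, hu, hv⟩ := h
  exact ⟨p ++ l₁, l₂, a, b, hc, by simp [hu], by simp [hv]⟩

lemma Step.append_right {u v : List (Fin k × Bool)} (h : Step F u v) (s : List (Fin k × Bool)) :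
    Step F (u ++ s) (v ++ s) := by
  obtain ⟨l₁, l₂, a, b, hc, hu, hv⟩ := h
  exact ⟨l₁, l₂ ++ s, a, b, hc, by simp [hu], by simp [hv]⟩

lemma Shuf.append_left {u v : List (Fin k × Bool)} (p : List (Fin k × Bool)) (h : Shuf F u v) :
    Shuf F (p ++ u) (p ++ v) := by
  induction h with
  | refl => exact Shuf.refl _
  | tail _ h2 ih => exact Shuf.trans ih (Step.shuf (h2.append_left p))

lemma Shuf.append_right {u v : List (Fin k × Bool)} (h : Shuf F u v) (s : List (Fin k × Bool)) :
    Shuf F (u ++ s) (v ++ s) := by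
  induction h with
  | refl => exact Shuf.refl _
  | tail _ h2 ih => exact Shuf.trans ih (Step.shuf (h2.append_right s))

lemma Shuf.length_eq {u v : List (Fin k × Bool)} (h : Shuf F u v) : u.length = v.length := by
  induction h with
  | refl => rfl
  | tail _ h2 ih =>
    obtain ⟨l₁, l₂, a, b, _, hu, hv⟩ := h2
    rw [ih, hu, hv]; simp

/-- moving a letter to the front past commuting letters -/
lemma shuf_move_front {a : Fin k × Bool} {l₁ l₂ : List (Fin k × Bool)}
    (h : ∀ b ∈ l₁, lcomm F a b) :
    Shuf F (l₁ ++ a :: l₂) (a :: (l₁ ++ l₂)) := by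
  induction l₁ with
  | nil => exact Shuf.refl _
  | cons c t ih =>
    have h1 : Shuf F (c :: (t ++ a :: l₂)) (c :: a :: (t ++ l₂)) :=
      (ih fun b hb => h b (List.mem_cons_of_mem _ hb)).cons c
    refine Shuf.trans h1 ?_
    exact Step.shuf ⟨[], t ++ l₂, c, a, (h c List.mem_cons_self).symm, rfl, rfl⟩

open Classical in
/-- filter onto a pair of letters -/
noncomputable def pf (x y : Fin k × Bool) (l : List (Fin k × Bool)) : List (Fin k × Bool) :=
  l.filter (fun c => decide (c = x ∨ c = y))

/-- the projection characterization of shuffle equivalence -/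
def Chr (F : Set (Sym2 (Fin k))) (u v : List (Fin k × Bool)) : Prop :=
  ∀ x y : Fin k × Bool, ¬ lcomm F x y → pf x y u = pf x y v

lemma Chr.refl (u : List (Fin k × Bool)) : Chr F u u := fun _ _ _ => rfl

lemma Chr.symm {u v : List (Fin k × Bool)} (h : Chr F u v) : Chr F v u :=
  fun x y hd => (h x y hd).symm

lemma Chr.trans {u v w : List (Fin k × Bool)} (h : Chr F u v) (h' : Chr F v w) : Chr F u w :=
  fun x y hd => (h x y hd).trans (h' x y hd)

lemma Step.chr {u v : List (Fin k × Bool)} (h : Step F u v) : Chr F u v := by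
  obtain ⟨l₁, l₂, a, b, hc, hu, hv⟩ := h
  intro x y hd
  subst hu; subst hv
  simp only [pf, List.filter_append, List.filter_cons]
  congr 1
  by_cases ha : (a = x ∨ a = y) <;> by_cases hb : (b = x ∨ b = y) <;>
    simp [ha, hb]
  -- remaining case: both selected, contradiction
  exfalso
  have hab : a ≠ b := lcomm_ne hc
  rcases ha with rfl | rfl <;> rcases hb with rfl | rfl
  · exact hab rfl
  · exact hd hc
  · exact hd hc.symm
  · exact hab rfl

lemma Shuf.chr {u v : List (Fin k × Bool)} (h : Shuf F u v) : Chr F u v := by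
  induction h with
  | refl => exact Chr.refl _
  | tail _ h2 ih => exact ih.trans h2.chr

lemma mem_of_pf {x y c : Fin k × Bool} {l : List (Fin k × Bool)} (h : c ∈ pf x y l) :
    c ∈ l ∧ (c = x ∨ c = y) := by
  have := List.of_mem_filter h
  exact ⟨List.mem_of_mem_filter h, by simpa using this⟩

lemma pf_cons_pos {x y c : Fin k × Bool} (l : List (Fin k × Bool)) (h : c = x ∨ c = y) :
    pf x y (c :: l) = c :: pf x y l := by
  simp [pf, List.filter_cons, h]

lemma pf_cons_neg {x y c : Fin k × Bool} (l : List (Fin k × Bool)) (h : ¬(c = x ∨ c = y)) :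
    pf x y (c :: l) = pf x y l := by
  simp [pf, List.filter_cons, h]

/-- first-occurrence split -/
lemma first_split {a : Fin k × Bool} {l : List (Fin k × Bool)} (h : a ∈ l) :
    ∃ l₁ l₂, l = l₁ ++ a :: l₂ ∧ a ∉ l₁ := by
  induction l with
  | nil => simp at h
  | cons c t ih =>
    by_cases hca : a = c
    · exact ⟨[], t, by simp [hca], by simp⟩
    · have hat : a ∈ t := by
        rcases List.mem_cons.1 h with h1 | h1
        · exact absurd h1 hca
        · exact h1
      obtain ⟨l₁, l₂, h1, h2⟩ := ih hat
      refine ⟨c :: l₁, l₂, by simp [h1], ?_⟩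
      simp only [List.mem_cons]
      rintro (h3 | h3)
      · exact hca h3
      · exact h2 h3

lemma chr_shuf : ∀ {u v : List (Fin k × Bool)}, Chr F u v → Shuf F u v := by
  intro u
  induction u with
  | nil =>
    intro v h
    cases v with
    | nil => exact Shuf.refl _
    | cons c t =>
      exfalso
      have := h c c (lcomm_irrefl c)
      rw [pf_cons_pos t (Or.inl rfl)] at this
      simp [pf] at this
  | cons a u' ih =>
    intro v h
    -- a occurs in v
    have hmem : a ∈ v := by
      have := h a a (lcomm_irrefl a)
      rw [pf_cons_pos u' (Or.inl rfl)] at this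
      have : a ∈ pf a a v := this ▸ List.mem_cons_self (a := a)
      exact (mem_of_pf this).1
    obtain ⟨v₁, v₂, hv, hnot⟩ := first_split hmem
    -- all letters of v₁ commute with a
    have hcomm : ∀ b ∈ v₁, lcomm F a b := by
      intro b hb
      by_contra hnc
      have hfil := h a b hnc
      rw [pf_cons_pos u' (Or.inl rfl), hv] at hfil
      -- head of lhs is a; head of rhs is in v₁ (since b ∈ v₁ is selected)
      have hbsel : b ∈ pf a b v₁ := by
        simp only [pf, List.mem_filter]
        exact ⟨hb, by simp⟩
      have : pf a b (v₁ ++ a :: v₂) = pf a b v₁ ++ pf a b (a :: v₂) := by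
        simp [pf, List.filter_append]
      rw [this] at hfil
      cases hpv : pf a b v₁ with
      | nil => rw [hpv] at hbsel; simp at hbsel
      | cons c s =>
        rw [hpv] at hfil
        have hca : c = a := by
          have := congrArg List.head? hfil
          simp at this
          first | exact this.symm | exact this.1.symm
        have hcv : c ∈ v₁ := by
          have : c ∈ pf a b v₁ := hpv ▸ List.mem_cons_self (a := c) (l := s)
          exact (mem_of_pf this).1
        rw [hca] at hcv
        exact hnot hcv
    -- move a to front in v
    have hmv : Shuf F v (a :: (v₁ ++ v₂)) := by
      rw [hv]; exact shuf_move_front hcomm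
    -- Chr u' (v₁ ++ v₂)
    have hchr : Chr F u' (v₁ ++ v₂) := by
      intro x y hd
      have hfil := h x y hd
      by_cases hpa : (a = x ∨ a = y)
      · rw [pf_cons_pos u' hpa, hv] at hfil
        have hpv1 : pf x y v₁ = [] := by
          simp only [pf]
          rw [List.filter_eq_nil_iff]
          intro b hb
          simp only [decide_eq_true_eq]
          rintro (rfl | rfl)
          · -- b = x; a = x or a = y
            rcases hpa with rfl | rfl
            · exact hnot hb
            · exact hd (hcomm _ hb).symm
          · rcases hpa with rfl | rfl
            · exact hd (hcomm _ hb)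
            · exact hnot hb
        have : pf x y (v₁ ++ a :: v₂) = a :: pf x y v₂ := by
          simp only [pf, List.filter_append] at *
          rw [show (List.filter (fun c => decide (c = x ∨ c = y)) v₁) = [] from hpv1]
          simp [List.filter_cons, hpa]
        rw [this] at hfil
        have : pf x y u' = pf x y v₂ := by
          injection hfil
        rw [this]
        simp only [pf, List.filter_append]
        rw [show (List.filter (fun c => decide (c = x ∨ c = y)) v₁) = [] from hpv1]
        simp
      · rw [pf_cons_neg u' hpa, hv] at hfil
        rw [hfil]
        simp [pf, List.filter_append, List.filter_cons, hpa]
    have := ih hchr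
    exact Shuf.trans (this.cons a) hmv.symm

/-- left cancellation for shuffle equivalence -/
lemma shuf_cancel {a : Fin k × Bool} {u v : List (Fin k × Bool)}
    (h : Shuf F (a :: u) (a :: v)) : Shuf F u v := by
  apply chr_shuf
  intro x y hd
  have := h.chr x y hd
  by_cases hpa : (a = x ∨ a = y)
  · rw [pf_cons_pos u hpa, pf_cons_pos v hpa] at this
    injection this
  · rwa [pf_cons_neg u hpa, pf_cons_neg v hpa] at this

/-- Levi-type lemma for distinct head letters -/
lemma shuf_levi {a b : Fin k × Bool} {u v : List (Fin k × Bool)}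
    (h : Shuf F (a :: u) (b :: v)) (hab : a ≠ b) :
    lcomm F a b ∧ ∃ t, Shuf F u (b :: t) ∧ Shuf F v (a :: t) := by
  have hcomm : lcomm F a b := by
    by_contra hnc
    have := h.chr a b hnc
    rw [pf_cons_pos u (Or.inl rfl), pf_cons_pos v (Or.inr rfl)] at this
    have h9 := congrArg List.head? this
    simp at h9
    first | exact hab h9 | exact hab h9.1
  refine ⟨hcomm, ?_⟩
  -- a occurs in v with commuting prefix: use chr of h
  have hch := h.chr
  have hmem : a ∈ v := by
    have := hch a a (lcomm_irrefl a)
    rw [pf_cons_pos u (Or.inl rfl), pf_cons_neg v (by rintro (rfl|rfl) <;> exact hab rfl)] at this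
    have : a ∈ pf a a v := this ▸ List.mem_cons_self (a := a)
    exact (mem_of_pf this).1
  obtain ⟨v₁, v₂, hv, hnot⟩ := first_split hmem
  have hcommv : ∀ c ∈ v₁, lcomm F a c := by
    intro c hc
    by_contra hnc
    have hfil := hch a c hnc
    have hbne : b ≠ a := hab.symm
    have hbsel : ¬ (b = a ∨ b = c) := by
      rintro (rfl | rfl)
      · exact hab rfl
      · exact hnc hcomm
    rw [pf_cons_pos u (Or.inl rfl), pf_cons_neg v hbsel, hv] at hfil
    have hcsel : c ∈ pf a c v₁ := by
      simp only [pf, List.mem_filter]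
      exact ⟨hc, by simp⟩
    have hsplit : pf a c (v₁ ++ a :: v₂) = pf a c v₁ ++ pf a c (a :: v₂) := by
      simp [pf, List.filter_append]
    rw [hsplit] at hfil
    cases hpv : pf a c v₁ with
    | nil => rw [hpv] at hcsel; simp at hcsel
    | cons d s =>
      rw [hpv] at hfil
      have hda : d = a := by
        have h9 := congrArg List.head? hfil
        simp at h9
        first | exact h9.symm | exact h9.1.symm
      have : d ∈ v₁ := (mem_of_pf (hpv ▸ (List.mem_cons_self (a := d) (l := s)))).1
      rw [hda] at this
      exact hnot this
  -- v shuf a :: (v₁ ++ v₂)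
  have hmv : Shuf F v (a :: (v₁ ++ v₂)) := hv ▸ shuf_move_front hcommv
  refine ⟨v₁ ++ v₂, ?_, hmv⟩
  -- a :: u  shuf  b :: v shuf b :: a :: (v₁++v₂) shuf a :: b :: (v₁++v₂); cancel a
  have h2 : Shuf F (a :: u) (a :: b :: (v₁ ++ v₂)) := by
    refine Shuf.trans h ?_
    refine Shuf.trans (hmv.cons b) ?_
    exact Step.shuf ⟨[], v₁ ++ v₂, b, a, hcomm.symm, rfl, rfl⟩
  exact shuf_cancel h2



variable {k : ℕ} {F : Set (Sym2 (Fin k))}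

/-- a reducible pair, positional form -/
def PRP (F : Set (Sym2 (Fin k))) (u : List (Fin k × Bool)) : Prop :=
  ∃ (p q : ℕ) (hpq : p < q) (hq : q < u.length),
    u[q] = linv (u[p]'(lt_trans hpq hq)) ∧
    ∀ r (h1 : p < r) (h2 : r < q), lcomm F (u[p]'(lt_trans hpq hq)) (u[r]'(lt_trans h2 hq))

/-- a reducible pair, decomposition form -/
def LocRP (F : Set (Sym2 (Fin k))) (u : List (Fin k × Bool)) : Prop :=
  ∃ (l₁ l₂ l₃ : List (Fin k × Bool)) (c : Fin k × Bool),
    u = l₁ ++ c :: l₂ ++ linv c :: l₃ ∧ ∀ b ∈ l₂, lcomm F c b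

/-- reduced word -/
def Red (F : Set (Sym2 (Fin k))) (u : List (Fin k × Bool)) : Prop := ¬ LocRP F u

lemma locrp_of_prp {u : List (Fin k × Bool)} (h : PRP F u) : LocRP F u := by
  obtain ⟨p, q, hpq, hq, hval, hint⟩ := h
  refine ⟨u.take p, (u.take q).drop (p + 1), u.drop (q + 1), u[p]'(lt_trans hpq hq), ?_, ?_⟩
  · have e4 : List.take (p+1) (u.take q) = u.take p ++ [u[p]'(lt_trans hpq hq)] := by
      rw [List.take_take]
      have h1 : min (p+1) q = p+1 := by omega
      rw [h1, List.take_succ, List.getElem?_eq_getElem (lt_trans hpq hq)]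
      simp
    have e5 := List.take_append_drop (p+1) (u.take q)
    rw [e4] at e5
    have e6 : u.take p ++ u[p]'(lt_trans hpq hq) :: (u.take q).drop (p+1) = u.take q := by
      rw [List.append_assoc, List.singleton_append] at e5
      exact e5
    conv_lhs => rw [← List.take_append_drop q u, ← e6]
    rw [List.drop_eq_getElem_cons hq, hval]
  · intro b hb
    rw [List.mem_iff_getElem] at hb
    obtain ⟨i, hi, hbv⟩ := hb
    have hlen : ((u.take q).drop (p+1)).length = q - (p+1) := by
      simp [List.length_drop, List.length_take]
      omega
    have hiq : p + 1 + i < q := by omega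
    have : ((u.take q).drop (p+1))[i] = u[p+1+i]'(lt_trans hiq hq) := by
      rw [List.getElem_drop, List.getElem_take]
    rw [this] at hbv
    rw [← hbv]
    exact hint (p+1+i) (by omega) hiq

lemma prp_of_locrp {u : List (Fin k × Bool)} (h : LocRP F u) : PRP F u := by
  obtain ⟨l₁, l₂, l₃, c, hu, hcomm⟩ := h
  have hlen : u.length = l₁.length + 1 + l₂.length + 1 + l₃.length := by
    simp [hu]; omega
  have h1 : ∀ (hh : l₁.length < u.length), u[l₁.length] = c := by
    intro hh
    rw [List.getElem_of_eq hu, List.getElem_append_left (by simp),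
      List.getElem_append_right (le_refl _)]
    simp
  have h2 : ∀ (hh : l₁.length + 1 + l₂.length < u.length),
      u[l₁.length + 1 + l₂.length] = linv c := by
    intro hh
    rw [List.getElem_of_eq hu, List.getElem_append_right
      (by simp only [List.length_append, List.length_cons]; omega)]
    simp only [show l₁.length + 1 + l₂.length - (l₁ ++ c :: l₂).length = 0 from by
      simp only [List.length_append, List.length_cons]; omega]
    simp
  have h3 : ∀ r (hr1 : l₁.length < r) (hr2 : r < l₁.length + 1 + l₂.length)
      (hh : r < u.length), u[r] ∈ l₂ := by
    intro r hr1 hr2 hh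
    rw [List.getElem_of_eq hu, List.getElem_append_left
      (by simp only [List.length_append, List.length_cons]; omega),
      List.getElem_append_right (by omega)]
    obtain ⟨j, hj⟩ : ∃ j, r - l₁.length = j + 1 := ⟨r - l₁.length - 1, by omega⟩
    simp only [hj]
    rw [List.getElem_cons_succ]
    apply List.getElem_mem
  refine ⟨l₁.length, l₁.length + 1 + l₂.length, by omega, by omega, ?_, ?_⟩
  · rw [h1, h2]
  · intro r hr1 hr2
    rw [h1]
    exact hcomm _ (h3 r hr1 hr2 (by omega))

lemma step_prp {u v : List (Fin k × Bool)} (hs : Step F u v) (h : PRP F v) : PRP F u := by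
  obtain ⟨s₁, s₂, a, b, hab, hu, hv⟩ := hs
  obtain ⟨p, q, hpq, hq, hval, hint⟩ := h
  have hulen : u.length = v.length := by rw [hu, hv]; simp
  have hvlen : v.length = s₁.length + 2 + s₂.length := by rw [hv]; simp; omega
  have gva : ∀ (hh : s₁.length + 1 < v.length), v[s₁.length+1] = a := by
    intro hh
    rw [List.getElem_of_eq hv, List.getElem_append_right (by omega)]
    simp only [show s₁.length + 1 - s₁.length = 1 from by omega]
    simp
  have gvb : ∀ (hh : s₁.length < v.length), v[s₁.length] = b := by
    intro hh
    rw [List.getElem_of_eq hv, List.getElem_append_right (le_refl _)]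
    simp
  have gua : ∀ (hh : s₁.length < u.length), u[s₁.length] = a := by
    intro hh
    rw [List.getElem_of_eq hu, List.getElem_append_right (le_refl _)]
    simp
  have gub : ∀ (hh : s₁.length + 1 < u.length), u[s₁.length+1] = b := by
    intro hh
    rw [List.getElem_of_eq hu, List.getElem_append_right (by omega)]
    simp only [show s₁.length + 1 - s₁.length = 1 from by omega]
    simp
  have gsame : ∀ i (hi : i < v.length), i ≠ s₁.length → i ≠ s₁.length + 1 → v[i] = u[i]'(by omega) := by
    intro i hi hi1 hi2
    rcases Nat.lt_or_ge i s₁.length with h1 | h1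
    · rw [List.getElem_of_eq hv, List.getElem_of_eq hu,
        List.getElem_append_left (by omega), List.getElem_append_left (by omega)]
    · have h2 : s₁.length + 2 ≤ i := by omega
      rw [List.getElem_of_eq hv, List.getElem_of_eq hu,
        List.getElem_append_right (by omega), List.getElem_append_right (by omega)]
      obtain ⟨j, hj⟩ : ∃ j, i - s₁.length = j + 2 := ⟨i - s₁.length - 2, by omega⟩
      simp only [hj]
      simp
  by_cases hpn : p = s₁.length
  · -- Case B : p = s₁.length, q ≥ s₁.length + 2 (q = s₁.length+1 impossible)
    simp only [hpn] at hval hint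
    have hq2 : q ≠ s₁.length + 1 := by
      intro hq1
      simp only [hq1] at hval
      rw [gvb (by omega), gva (by omega)] at hval
      exact hab.1 (by rw [hval]; simp)
    have hqge : s₁.length + 2 ≤ q := by omega
    refine ⟨s₁.length + 1, q, by omega, by omega, ?_, ?_⟩
    · rw [gub (by omega), ← gvb (by omega), ← gsame q hq (by omega) (by omega)]
      exact hval
    · intro r h1 h2
      rw [gub (by omega), ← gvb (by omega), ← gsame r (by omega) (by omega) (by omega)]
      exact hint r (by omega) h2
  · by_cases hpn1 : p = s₁.length + 1
    · -- Case C : p = s₁.length + 1, q ≥ s₁.length + 2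
      simp only [hpn1] at hval hint
      refine ⟨s₁.length, q, by omega, by omega, ?_, ?_⟩
      · rw [gua (by omega), ← gva (by omega), ← gsame q hq (by omega) (by omega)]
        exact hval
      · intro r h1 h2
        rcases Nat.lt_or_ge r (s₁.length + 2) with h3 | h3
        · have hr : r = s₁.length + 1 := by omega
          simp only [hr]
          rw [gua (by omega), gub (by omega)]
          exact hab
        · rw [gua (by omega), ← gva (by omega), ← gsame r (by omega) (by omega) (by omega)]
          exact hint r (by omega) h2
    · by_cases hqn : q = s₁.length
      · -- Case D : q = s₁.length, p < s₁.length
        have hpltn : p < s₁.length := by omega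
        simp only [hqn] at hval
        rw [gvb (by omega)] at hval
        have hvp : v[p]'(by omega) = linv b := by rw [hval]; simp
        refine ⟨p, s₁.length + 1, by omega, by omega, ?_, ?_⟩
        · rw [gub (by omega), ← gsame p (by omega) (by omega) (by omega), hvp]
          simp
        · intro r h1 h2
          rw [← gsame p (by omega) (by omega) (by omega), hvp]
          rcases Nat.lt_or_ge r s₁.length with h3 | h3
          · rw [← gsame r (by omega) (by omega) (by omega)]
            have := hint r h1 (by omega)
            rwa [hvp] at this
          · have hr : r = s₁.length := by omega
            simp only [hr]
            rw [gua (by omega)]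
            simpa using hab.symm
      · by_cases hqn1 : q = s₁.length + 1
        · -- Case E : q = s₁.length + 1, p < s₁.length
          have hpltn : p < s₁.length := by omega
          simp only [hqn1] at hval
          rw [gva (by omega)] at hval
          refine ⟨p, s₁.length, by omega, by omega, ?_, ?_⟩
          · rw [gua (by omega), ← gsame p (by omega) (by omega) (by omega)]
            exact hval
          · intro r h1 h2
            rw [← gsame p (by omega) (by omega) (by omega),
              ← gsame r (by omega) (by omega) (by omega)]
            exact hint r h1 (by omega)
        · -- Case A : p, q ∉ {s₁.length, s₁.length+1}
          refine ⟨p, q, hpq, by omega, ?_, ?_⟩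
          · rw [← gsame p (by omega) hpn hpn1, ← gsame q (by omega) hqn hqn1]
            exact hval
          · intro r h1 h2
            rw [← gsame p (by omega) hpn hpn1]
            by_cases hrn : r = s₁.length
            · simp only [hrn]
              rw [gua (by omega), ← gva (by omega)]
              exact hint (s₁.length+1) (by omega) (by omega)
            · by_cases hrn1 : r = s₁.length + 1
              · simp only [hrn1]
                rw [gub (by omega), ← gvb (by omega)]
                exact hint s₁.length (by omega) (by omega)
              · rw [← gsame r (by omega) hrn hrn1]
                exact hint r h1 h2

lemma step_locrp {u v : List (Fin k × Bool)} (hs : Step F u v) (h : LocRP F v) : LocRP F u :=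
  locrp_of_prp (step_prp hs (prp_of_locrp h))

lemma shuf_locrp {u v : List (Fin k × Bool)} (hs : Shuf F u v) (h : LocRP F v) : LocRP F u := by
  induction hs with
  | refl => exact h
  | tail _ h2 ih => exact ih (step_locrp h2 h)

lemma Shuf.red {u v : List (Fin k × Bool)} (hs : Shuf F u v) (h : Red F u) : Red F v :=
  fun hl => h (shuf_locrp hs hl)

/-- tail of a reduced word is reduced -/
lemma Red.tail {x : Fin k × Bool} {u : List (Fin k × Bool)} (h : Red F (x :: u)) : Red F u := by
  intro hl
  obtain ⟨l₁, l₂, l₃, c, he, hc⟩ := hl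
  exact h ⟨x :: l₁, l₂, l₃, c, by simp [he], hc⟩

/-- adjacent cancelling pair at the front is a reducible pair -/
lemma locrp_pair (c : Fin k × Bool) (t : List (Fin k × Bool)) : LocRP F (c :: linv c :: t) :=
  ⟨[], [], t, c, by simp, by simp⟩

/-- extraction lemma -/
lemma red_extract {a : Fin k × Bool} {u : List (Fin k × Bool)}
    (hnr : ¬ Red F (a :: u)) (hr : Red F u) :
    ∃ u', Shuf F u (linv a :: u') := by
  rcases not_not.1 (fun hc => hnr hc) with ⟨l₁, l₂, l₃, c, he, hcm⟩
  cases l₁ with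
  | nil =>
    simp only [List.nil_append, List.cons_append, List.cons.injEq] at he
    obtain ⟨rfl, he2⟩ := he
    refine ⟨l₂ ++ l₃, ?_⟩
    rw [he2]
    have h7 : ∀ b ∈ l₂, lcomm F (linv a) b := by
      intro b hb; simpa using hcm b hb
    exact shuf_move_front h7
  | cons x l₁' =>
    exfalso
    simp only [List.cons_append, List.cons.injEq] at he
    exact hr ⟨l₁', l₂, l₃, c, he.2, hcm⟩

/-- insertion of a commuting letter in second position preserves reducible pairs -/
lemma locrp_insert {a b : Fin k × Bool} {u : List (Fin k × Bool)} (hab : lcomm F a b)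
    (h : LocRP F (a :: u)) : LocRP F (a :: b :: u) := by
  obtain ⟨l₁, l₂, l₃, c, he, hcm⟩ := h
  cases l₁ with
  | nil =>
    simp only [List.nil_append, List.cons_append, List.cons.injEq] at he
    obtain ⟨rfl, he2⟩ := he
    refine ⟨[], b :: l₂, l₃, a, by simp [he2], ?_⟩
    intro d hd
    rcases List.mem_cons.1 hd with rfl | hd2
    · exact hab
    · exact hcm d hd2
  | cons x l₁' =>
    simp only [List.cons_append, List.cons.injEq] at he
    obtain ⟨rfl, he2⟩ := he
    exact ⟨a :: b :: l₁', l₂, l₃, c, by simp [he2], hcm⟩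

/-- the inverse-reverse of a word -/
def winv (l : List (Fin k × Bool)) : List (Fin k × Bool) := (l.map linv).reverse

@[simp] lemma winv_nil : winv (k := k) [] = [] := rfl

lemma winv_cons (a : Fin k × Bool) (l : List (Fin k × Bool)) :
    winv (a :: l) = winv l ++ [linv a] := by simp [winv]

lemma winv_append (l m : List (Fin k × Bool)) : winv (l ++ m) = winv m ++ winv l := by
  simp [winv]

@[simp] lemma winv_winv (l : List (Fin k × Bool)) : winv (winv l) = l := by
  simp only [winv, List.map_reverse, List.reverse_reverse, List.map_map]
  have h : (linv (k := k)) ∘ linv = id := funext linv_linv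
  rw [h, List.map_id]

lemma locrp_winv {u : List (Fin k × Bool)} (h : LocRP F u) : LocRP F (winv u) := by
  obtain ⟨l₁, l₂, l₃, c, he, hcm⟩ := h
  refine ⟨winv l₃, winv l₂, winv l₁, c, ?_, ?_⟩
  · rw [he]
    simp [winv_append, winv_cons, List.append_assoc]
  · intro b hb
    simp only [winv, List.mem_reverse, List.mem_map] at hb
    obtain ⟨d, hd, rfl⟩ := hb
    simpa using hcm d hd

lemma red_winv {u : List (Fin k × Bool)} (h : Red F u) : Red F (winv u) := by
  intro hl
  have := locrp_winv hl
  rw [winv_winv] at this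
  exact h this

lemma step_winv {u v : List (Fin k × Bool)} (h : Step F u v) : Step F (winv u) (winv v) := by
  obtain ⟨l₁, l₂, a, b, hc, huu, hvv⟩ := h
  refine ⟨winv l₂, winv l₁, linv b, linv a, by simpa using hc.symm, ?_, ?_⟩
  · rw [huu]
    simp [winv_append, winv_cons, List.append_assoc]
  · rw [hvv]
    simp [winv_append, winv_cons, List.append_assoc]

lemma shuf_winv {u v : List (Fin k × Bool)} (h : Shuf F u v) : Shuf F (winv u) (winv v) := by
  induction h with
  | refl => exact Shuf.refl _
  | tail _ h2 ih => exact Shuf.trans ih (Step.shuf (step_winv h2))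





variable {k : ℕ} {F : Set (Sym2 (Fin k))}

lemma gen_comm {i j : Fin k} (hij : i ≠ j) (hF : s(i, j) ∉ F) :
    Commute (gen k F i) (gen k F j) := by
  have hr : (FreeGroup.of i * FreeGroup.of j * (FreeGroup.of i)⁻¹ * (FreeGroup.of j)⁻¹ :
      FreeGroup (Fin k)) ∈ Rels k F := ⟨i, j, hij, hF, rfl⟩
  have h1 : (QuotientGroup.mk (FreeGroup.of i * FreeGroup.of j * (FreeGroup.of i)⁻¹ *
      (FreeGroup.of j)⁻¹) : Grp k F) = 1 :=
    (QuotientGroup.eq_one_iff _).2 (Subgroup.subset_normalClosure hr)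
  have h2 : gen k F i * gen k F j * (gen k F i)⁻¹ * (gen k F j)⁻¹ = 1 := by
    exact h1
  rw [← commutatorElement_eq_one_iff_commute]
  exact h2

lemma sym_comm {a b : Fin k × Bool} (h : lcomm F a b) :
    Commute (sym k F a) (sym k F b) := by
  have hg := gen_comm (F := F) h.1 h.2
  rcases a with ⟨i, ba⟩; rcases b with ⟨j, bb⟩
  cases ba <;> cases bb
  · exact (hg.inv_left).inv_right
  · exact hg.inv_left
  · exact hg.inv_right
  · exact hg

lemma sym_linv (a : Fin k × Bool) : sym k F (linv a) = (sym k F a)⁻¹ := by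
  rcases a with ⟨i, b⟩
  cases b <;> simp [sym, linv]

@[simp] lemma wordProd_nil : wordProd k F [] = 1 := rfl

lemma wordProd_cons (a : Fin k × Bool) (l : List (Fin k × Bool)) :
    wordProd k F (a :: l) = sym k F a * wordProd k F l := by
  simp [wordProd]

lemma wordProd_append (l m : List (Fin k × Bool)) :
    wordProd k F (l ++ m) = wordProd k F l * wordProd k F m := by
  simp [wordProd]

lemma wordProd_winv (l : List (Fin k × Bool)) :
    wordProd k F (winv l) = (wordProd k F l)⁻¹ := by
  induction l with
  | nil => simp
  | cons a t ih =>
    rw [winv_cons, wordProd_append, wordProd_cons, wordProd_cons, ih]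
    simp [sym_linv, mul_inv_rev, wordProd]

lemma step_wordProd {u v : List (Fin k × Bool)} (h : Step F u v) :
    wordProd k F u = wordProd k F v := by
  obtain ⟨l₁, l₂, a, b, hc, hu, hv⟩ := h
  subst hu; subst hv
  simp only [wordProd_append, wordProd_cons]
  congr 1
  rw [← mul_assoc, ← mul_assoc, (sym_comm hc).eq]

lemma shuf_wordProd {u v : List (Fin k × Bool)} (h : Shuf F u v) :
    wordProd k F u = wordProd k F v := by
  induction h with
  | refl => rfl
  | tail _ h2 ih => exact ih.trans (step_wordProd h2)

lemma commute_sym_wordProd {c : Fin k × Bool} {l : List (Fin k × Bool)}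
    (h : ∀ b ∈ l, lcomm F c b) : Commute (sym k F c) (wordProd k F l) := by
  induction l with
  | nil => simp [wordProd]
  | cons a t ih =>
    rw [wordProd_cons]
    exact Commute.mul_right (sym_comm (h a List.mem_cons_self))
      (ih fun b hb => h b (List.mem_cons_of_mem _ hb))

lemma locrp_shorten {u : List (Fin k × Bool)} (h : LocRP F u) :
    ∃ w, wordProd k F w = wordProd k F u ∧ w.length + 2 = u.length := by
  obtain ⟨l₁, l₂, l₃, c, hu, hcm⟩ := h
  refine ⟨l₁ ++ l₂ ++ l₃, ?_, by simp [hu]; omega⟩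
  simp only [hu, wordProd_append, wordProd_cons, sym_linv]
  rw [(commute_sym_wordProd hcm).eq]
  group

lemma wordProd_surjective : Function.Surjective (wordProd k F) := by
  intro x
  have hx : x ∈ Subgroup.closure (Set.range (PresentedGroup.of (rels := Rels k F))) := by
    rw [PresentedGroup.closure_range_of]; trivial
  induction hx using Subgroup.closure_induction with
  | mem y hy =>
    obtain ⟨i, rfl⟩ := hy
    exact ⟨[(i, true)], by simp [wordProd, sym, gen]⟩
  | one => exact ⟨[], rfl⟩
  | mul y z _ _ hy hz =>
    obtain ⟨l, rfl⟩ := hy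
    obtain ⟨m, rfl⟩ := hz
    exact ⟨l ++ m, wordProd_append l m⟩
  | inv y _ hy =>
    obtain ⟨l, rfl⟩ := hy
    exact ⟨winv l, wordProd_winv l⟩

lemma len_le {x : Grp k F} {l : List (Fin k × Bool)} (h : wordProd k F l = x) :
    len x ≤ l.length := Nat.sInf_le ⟨l, h, rfl⟩

lemma exists_min_word (x : Grp k F) :
    ∃ l, wordProd k F l = x ∧ l.length = len x := by
  obtain ⟨l, hl⟩ := wordProd_surjective (k := k) (F := F) x
  have hne : {n | ∃ l, wordProd k F l = x ∧ l.length = n}.Nonempty :=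
    ⟨l.length, ⟨l, hl, rfl⟩⟩
  exact Nat.sInf_mem hne

lemma exists_red_min_word (x : Grp k F) :
    ∃ l, Red F l ∧ wordProd k F l = x ∧ l.length = len x := by
  obtain ⟨l, hl, hlen⟩ := exists_min_word x
  refine ⟨l, ?_, hl, hlen⟩
  intro hbad
  obtain ⟨w, hw, hwl⟩ := locrp_shorten hbad
  have := len_le (hw.trans hl)
  omega

/-! ### The action on reduced words -/

/-- reduced words -/
def RW (k : ℕ) (F : Set (Sym2 (Fin k))) := {l : List (Fin k × Bool) // Red F l}

instance nfSetoid (k : ℕ) (F : Set (Sym2 (Fin k))) : Setoid (RW k F) :=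
  ⟨fun u v => Shuf F u.1 v.1,
    ⟨fun _ => Shuf.refl _, Shuf.symm, Shuf.trans⟩⟩

/-- normal forms -/
def NF (k : ℕ) (F : Set (Sym2 (Fin k))) := Quotient (nfSetoid k F)

/-- the letter/word relation defining the action -/
def ARel (F : Set (Sym2 (Fin k))) (a : Fin k × Bool) (u w : List (Fin k × Bool)) : Prop :=
  Shuf F (a :: u) w ∨ Shuf F u (linv a :: w)

open Classical in
noncomputable def actFun (a : Fin k × Bool) (u : RW k F) : RW k F :=
  if h : Red F (a :: u.1) then ⟨a :: u.1, h⟩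
  else
    ⟨Classical.choose (red_extract h u.2), by
      have hsp := Classical.choose_spec (red_extract h u.2)
      exact (hsp.red u.2).tail⟩

lemma arel_actFun (a : Fin k × Bool) (u : RW k F) : ARel F a u.1 (actFun a u).1 := by
  classical
  by_cases h : Red F (a :: u.1)
  · have e : actFun a u = ⟨a :: u.1, h⟩ := dif_pos h
    rw [e]; exact Or.inl (Shuf.refl _)
  · have e : actFun a u = ⟨Classical.choose (red_extract h u.2),
        ((Classical.choose_spec (red_extract h u.2)).red u.2).tail⟩ := dif_neg h
    rw [e]; exact Or.inr (Classical.choose_spec (red_extract (by assumption) u.2))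

lemma arel_unique {a : Fin k × Bool} {u w w' : List (Fin k × Bool)}
    (hu : Red F u) (hw : Red F w) (hw' : Red F w')
    (h1 : ARel F a u w) (h2 : ARel F a u w') : Shuf F w w' := by
  rcases h1 with h1 | h1 <;> rcases h2 with h2 | h2
  · exact h1.symm.trans h2
  · exfalso
    have h3 : Shuf F (a :: u) (a :: linv a :: w') := h2.cons a
    have h4 : LocRP F (a :: u) := shuf_locrp h3 (locrp_pair a w')
    exact (h1.symm.red hw) h4
  · exfalso
    have h3 : Shuf F (a :: u) (a :: linv a :: w) := h1.cons a
    have h4 : LocRP F (a :: u) := shuf_locrp h3 (locrp_pair a w)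
    exact (h2.symm.red hw') h4
  · exact shuf_cancel (a := linv a) (h1.symm.trans h2)

lemma arel_shuf_left {a : Fin k × Bool} {u v w : List (Fin k × Bool)}
    (huv : Shuf F u v) (h : ARel F a v w) : ARel F a u w := by
  rcases h with h | h
  · exact Or.inl ((huv.cons a).trans h)
  · exact Or.inr (huv.trans h)

noncomputable def act (a : Fin k × Bool) : NF k F → NF k F :=
  Quotient.map (actFun a) (by
    intro u v huv
    have h1 := arel_actFun a u
    have h2 := arel_actFun a v
    exact arel_unique u.2 (actFun a u).2 (actFun a v).2 h1 (arel_shuf_left huv h2))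

lemma act_mk (a : Fin k × Bool) (u : RW k F) :
    act a (⟦u⟧ : NF k F) = ⟦actFun a u⟧ := rfl

lemma act_eq_of_arel {a : Fin k × Bool} {u w : RW k F} (h : ARel F a u.1 w.1) :
    act a (⟦u⟧ : NF k F) = ⟦w⟧ := by
  rw [act_mk]
  exact Quotient.sound (arel_unique u.2 (actFun a u).2 w.2 (arel_actFun a u) h)

lemma arel_inv {a : Fin k × Bool} {u w : List (Fin k × Bool)}
    (h : ARel F a u w) : ARel F (linv a) w u := by
  rcases h with h | h
  · exact Or.inr (by simpa using h.symm)
  · exact Or.inl (by simpa using h.symm)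

lemma act_act_linv (a : Fin k × Bool) (x : NF k F) : act (linv a) (act a x) = x := by
  induction x using Quotient.inductionOn with
  | h u =>
    have h1 := arel_actFun a u
    rw [act_mk]
    exact act_eq_of_arel (arel_inv h1)

lemma act_linv_act (a : Fin k × Bool) (x : NF k F) : act a (act (linv a) x) = x := by
  have := act_act_linv (F := F) (linv a) x
  rwa [linv_linv] at this

/-- the key exchange lemma: commuting letters yield commuting actions -/
lemma arel_swap {a b : Fin k × Bool} (hab : lcomm F a b) {u w v : List (Fin k × Bool)}
    (hu : Red F u) (hw : Red F w) (hv : Red F v)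
    (h1 : ARel F b u w) (h2 : ARel F a w v) :
    ∃ w', Red F w' ∧ ARel F a u w' ∧ ARel F b w' v := by
  have hba : lcomm F b a := hab.symm
  rcases h1 with h1 | h1 <;> rcases h2 with h2 | h2
  · -- (i) push b, push a
    have hRav : Red F (a :: w) := h2.symm.red hv
    have hRabu : Red F (a :: b :: u) := (h1.symm.cons a).red hRav
    have hRau : Red F (a :: u) := fun hl => hRabu (locrp_insert hab hl)
    refine ⟨a :: u, hRau, Or.inl (Shuf.refl _), Or.inl ?_⟩
    have c1 : Shuf F v (a :: b :: u) := h2.symm.trans (h1.symm.cons a)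
    have c2 : Step F (a :: b :: u) (b :: a :: u) := ⟨[], u, a, b, hab, rfl, rfl⟩
    exact (c1.trans c2.shuf).symm
  · -- (ii) push b, pop a
    have hchain : Shuf F (b :: u) (linv a :: v) := h1.trans h2
    have hne : b ≠ linv a := by
      intro hh
      exact hba.1 (by rw [hh]; simp)
    obtain ⟨_, t, ht1, ht2⟩ := shuf_levi hchain hne
    have hRbt : Red F (b :: t) := ht2.red hv
    refine ⟨t, hRbt.tail, Or.inr ht1, Or.inl ht2.symm⟩
  · -- (iii) pop b, push a
    have hRaw : Red F (a :: w) := h2.symm.red hv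
    have hRw' : Red F (linv b :: a :: w) := by
      intro hl
      have hnr : ¬ Red F (linv b :: a :: w) := fun hr => hr hl
      obtain ⟨z, hz⟩ := red_extract hnr hRaw
      rw [linv_linv] at hz
      have hne : a ≠ b := lcomm_ne hab
      obtain ⟨_, r, hr1, hr2⟩ := shuf_levi hz hne
      have hfin : Shuf F u (linv b :: b :: r) := h1.trans (hr1.cons (linv b))
      have : LocRP F u := shuf_locrp hfin (by simpa using locrp_pair (linv b) r)
      exact hu this
    refine ⟨linv b :: a :: w, hRw', Or.inl ?_, Or.inr ((h2.cons (linv b)))⟩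
    have c1 : Shuf F (a :: u) (a :: linv b :: w) := h1.cons a
    have c2 : Step F (a :: linv b :: w) (linv b :: a :: w) :=
      ⟨[], w, a, linv b, by simpa using hab, rfl, rfl⟩
    exact c1.trans c2.shuf
  · -- (iv) pop b, pop a
    have hchain : Shuf F u (linv b :: linv a :: v) := h1.trans (h2.cons (linv b))
    have c2 : Step F (linv b :: linv a :: v) (linv a :: linv b :: v) :=
      ⟨[], v, linv b, linv a, by simpa using hba, rfl, rfl⟩
    have hfin : Shuf F u (linv a :: linv b :: v) := hchain.trans c2.shuf
    have hRw' : Red F (linv b :: v) := ((hfin.red hu)).tail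
    exact ⟨linv b :: v, hRw', Or.inr hfin, Or.inr (Shuf.refl _)⟩

lemma act_comm {a b : Fin k × Bool} (hab : lcomm F a b) (x : NF k F) :
    act a (act b x) = act b (act a x) := by
  induction x using Quotient.inductionOn with
  | h u =>
    set w := actFun b u with hwdef
    have h1 : ARel F b u.1 w.1 := arel_actFun b u
    set v := actFun a w with hvdef
    have h2 : ARel F a w.1 v.1 := arel_actFun a w
    obtain ⟨w', hw', ha1, ha2⟩ := arel_swap hab u.2 w.2 v.2 h1 h2
    have e1 : act b (⟦u⟧ : NF k F) = ⟦w⟧ := rfl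
    have e2 : act a (⟦w⟧ : NF k F) = ⟦v⟧ := rfl
    have e3 : act a (⟦u⟧ : NF k F) = ⟦(⟨w', hw'⟩ : RW k F)⟧ := act_eq_of_arel ha1
    have e4 : act b (⟦(⟨w', hw'⟩ : RW k F)⟧ : NF k F) = ⟦v⟧ := act_eq_of_arel ha2
    rw [e1, e2, e3]; exact e4.symm

/-! ### The permutation representation -/

noncomputable def perm (a : Fin k × Bool) : Equiv.Perm (NF k F) :=
  ⟨act a, act (linv a), act_act_linv a, act_linv_act a⟩

lemma perm_apply (a : Fin k × Bool) (x : NF k F) : perm a x = act a x := rfl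

lemma perm_inv (a : Fin k × Bool) : (perm a : Equiv.Perm (NF k F))⁻¹ = perm (linv a) := by
  apply Equiv.ext
  intro x
  rfl

noncomputable def permf : Fin k → Equiv.Perm (NF k F) := fun i => perm (i, true)

lemma perm_rels : ∀ r ∈ Rels k F, (FreeGroup.lift (permf (F := F))) r = 1 := by
  rintro r ⟨i, j, hij, hF, rfl⟩
  have hcomm : lcomm F (i, true) (j, true) := ⟨hij, hF⟩
  simp only [map_mul, map_inv, FreeGroup.lift_apply_of]
  rw [mul_inv_eq_one (a := permf i * permf j * (permf i)⁻¹)]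
  rw [mul_inv_eq_iff_eq_mul]
  apply Equiv.ext
  intro x
  show (permf i) ((permf j) x) = (permf j) ((permf i) x)
  exact act_comm hcomm x

noncomputable def Φ : Grp k F →* Equiv.Perm (NF k F) :=
  PresentedGroup.toGroup (perm_rels (k := k) (F := F))

lemma Φ_gen (i : Fin k) : Φ (gen k F i) = perm (i, true) :=
  PresentedGroup.toGroup.of _

lemma Φ_sym (a : Fin k × Bool) : Φ (sym k F a) = perm (F := F) a := by
  rcases a with ⟨i, b⟩
  cases b
  · show Φ (sym k F (i, false)) = perm (i, false)
    have : sym k F (i, false) = (gen k F i)⁻¹ := by simp [sym]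
    rw [this, map_inv, Φ_gen, perm_inv]
    rfl
  · show Φ (sym k F (i, true)) = perm (i, true)
    have : sym k F (i, true) = gen k F i := by simp [sym]
    rw [this, Φ_gen]

/-! ### Lengths -/

noncomputable def nflen : NF k F → ℕ :=
  Quotient.lift (fun u : RW k F => u.1.length) (fun u v h => Shuf.length_eq h)

/-- the empty normal form -/
def nfone : NF k F := ⟦⟨[], fun h => by
  obtain ⟨l₁, l₂, l₃, c, he, _⟩ := h
  simp at he⟩⟧

lemma arel_length {a : Fin k × Bool} {u w : List (Fin k × Bool)} (h : ARel F a u w) :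
    w.length = u.length + 1 ∨ u.length = w.length + 1 := by
  rcases h with h | h
  · left
    have := h.length_eq
    simpa using this.symm
  · right
    have := h.length_eq
    simpa using this

lemma nflen_act_le (a : Fin k × Bool) (x : NF k F) :
    nflen (act a x) ≤ nflen x + 1 := by
  induction x using Quotient.inductionOn with
  | h u =>
    rw [act_mk]
    show (actFun a u).1.length ≤ u.1.length + 1
    rcases arel_length (arel_actFun a u) with h | h <;> omega

lemma nflen_wordProd_le (l : List (Fin k × Bool)) :
    nflen (Φ (wordProd k F l) nfone) ≤ l.length := by
  induction l with
  | nil => simp [wordProd, nfone, nflen]; rfl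
  | cons a t ih =>
    rw [wordProd_cons, map_mul]
    have : (Φ (sym k F a) * Φ (wordProd k F t)) nfone
        = act a (Φ (wordProd k F t) nfone) := by
      rw [Equiv.Perm.mul_apply, Φ_sym]
      rfl
    rw [this]
    calc nflen (act a (Φ (wordProd k F t) nfone))
        ≤ nflen (Φ (wordProd k F t) nfone) + 1 := nflen_act_le _ _
      _ ≤ t.length + 1 := by omega
      _ = (a :: t).length := by simp

lemma Φ_red_word {u : List (Fin k × Bool)} (hu : Red F u) :
    Φ (wordProd k F u) nfone = ⟦(⟨u, hu⟩ : RW k F)⟧ := by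
  induction u with
  | nil => simp [wordProd, nfone]; rfl
  | cons a t ih =>
    rw [wordProd_cons, map_mul]
    have ht : Red F t := hu.tail
    have e1 : (Φ (sym k F a) * Φ (wordProd k F t)) nfone
        = act a (Φ (wordProd k F t) nfone) := by
      rw [Equiv.Perm.mul_apply, Φ_sym]
      rfl
    rw [e1, ih ht]
    exact act_eq_of_arel (u := ⟨t, ht⟩) (w := ⟨a :: t, hu⟩) (Or.inl (Shuf.refl _))

/-- MAIN: reduced words are geodesic -/
theorem red_length_len {u : List (Fin k × Bool)} (hu : Red F u) :
    u.length = len (wordProd k F u) := by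
  have h1 : len (wordProd k F u) ≤ u.length := len_le rfl
  obtain ⟨l, hl, hlen⟩ := exists_min_word (wordProd k F u)
  have h2 : nflen (Φ (wordProd k F u) nfone) ≤ l.length := by
    rw [← hl]
    exact nflen_wordProd_le l
  rw [Φ_red_word hu] at h2
  have h3 : nflen (⟦(⟨u, hu⟩ : RW k F)⟧ : NF k F) = u.length := rfl
  change u.length ≤ l.length at h2
  omega

/-- uniqueness of reduced words up to shuffling -/
theorem red_unique {u v : List (Fin k × Bool)} (hu : Red F u) (hv : Red F v)
    (h : wordProd k F u = wordProd k F v) : Shuf F u v := by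
  have h1 := Φ_red_word hu
  have h2 := Φ_red_word hv
  rw [h, h2] at h1
  exact Shuf.symm (Quotient.exact h1)






variable {k : ℕ} {F : Set (Sym2 (Fin k))}

lemma len_one : len (1 : Grp k F) = 0 :=
  Nat.le_zero.1 (len_le (l := []) rfl)

lemma len_inv_le (x : Grp k F) : len x⁻¹ ≤ len x := by
  obtain ⟨l, hl, hlen⟩ := exists_min_word x
  have h2 : wordProd k F (winv l) = x⁻¹ := by rw [wordProd_winv, hl]
  have := len_le h2
  have h3 : (winv l).length = l.length := by simp [winv]
  omega

lemma len_inv (x : Grp k F) : len x⁻¹ = len x := by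
  have h1 := len_inv_le x
  have h2 := len_inv_le x⁻¹
  rw [inv_inv] at h2
  omega

lemma len_mul_le (x y : Grp k F) : len (x * y) ≤ len x + len y := by
  obtain ⟨l, hl, hlen⟩ := exists_min_word x
  obtain ⟨m, hm, hmlen⟩ := exists_min_word y
  have h2 : wordProd k F (l ++ m) = x * y := by rw [wordProd_append, hl, hm]
  have := len_le h2
  simp at this
  omega

lemma len_sym_le (a : Fin k × Bool) : len (sym k F a) ≤ 1 :=
  len_le (l := [a]) (by rw [wordProd_cons]; simp)

/-- `a` is a first letter of `x` -/
def FirstLetter (a : Fin k × Bool) (x : Grp k F) : Prop :=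
  ∃ t, Red F (a :: t) ∧ wordProd k F (a :: t) = x

lemma firstLetter_len {a : Fin k × Bool} {x : Grp k F} (h : FirstLetter a x) :
    len ((sym k F a)⁻¹ * x) + 1 = len x := by
  obtain ⟨t, hred, hw⟩ := h
  have h1 : (a :: t).length = len x := by rw [red_length_len hred, hw]
  have h2 : wordProd k F t = (sym k F a)⁻¹ * x := by
    rw [← hw, wordProd_cons]
    group
  have h3 : t.length = len ((sym k F a)⁻¹ * x) := by rw [red_length_len hred.tail, h2]
  simp at h1
  omega

lemma mem_take_idx {α : Type*} {l : List α} {j : ℕ} {b : α} (h : b ∈ l.take j) :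
    ∃ i, ∃ (h2 : i < l.length), i < j ∧ l[i] = b := by
  rw [List.mem_iff_getElem] at h
  obtain ⟨i, hi, he⟩ := h
  have hlen : (l.take j).length = min j l.length := List.length_take
  refine ⟨i, by omega, by omega, ?_⟩
  rw [← he, List.getElem_take]

lemma mem_drop_idx {α : Type*} {l : List α} {j : ℕ} {b : α} (h : b ∈ l.drop j) :
    ∃ i, ∃ (h2 : i < l.length), j ≤ i ∧ l[i] = b := by
  rw [List.mem_iff_getElem] at h
  obtain ⟨i, hi, he⟩ := h
  have hlen : (l.drop j).length = l.length - j := List.length_drop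
  refine ⟨j + i, by omega, by omega, ?_⟩
  rw [← he, List.getElem_drop]

/-- the key straddle lemma: without a common first letter, no cancellation happens -/
lemma no_common_first {y z : Grp k F}
    (h : ∀ a : Fin k × Bool, ¬ (FirstLetter a y ∧ FirstLetter a z)) :
    len (y⁻¹ * z) = len y + len z := by
  obtain ⟨u, hu, huw, hul⟩ := exists_red_min_word y
  obtain ⟨v, hv, hvw, hvl⟩ := exists_red_min_word z
  have hAred : Red F (winv u) := red_winv hu
  have hAl : (winv u).length = u.length := by simp [winv]
  have hw : wordProd k F (winv u ++ v) = y⁻¹ * z := by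
    rw [wordProd_append, wordProd_winv, huw, hvw]
  by_cases hred : Red F (winv u ++ v)
  · have h2 := red_length_len hred
    rw [hw] at h2
    simp only [List.length_append] at h2
    omega
  · exfalso
    obtain ⟨p, q, hpq, hq, hval, hint⟩ := prp_of_locrp (not_not.1 hred)
    have hWlen : (winv u ++ v).length = u.length + v.length := by simp [winv]
    -- three cases
    rcases Nat.lt_or_ge q (winv u).length with hcase1 | hcase1
    · -- pair inside winv u
      apply hAred
      apply locrp_of_prp
      have g1 : ∀ i (hi : i < (winv u).length), (winv u ++ v)[i]'(by simp; omega) = (winv u)[i] :=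
        fun i hi => List.getElem_append_left hi
      refine ⟨p, q, hpq, hcase1, ?_, ?_⟩
      · rw [← g1 q hcase1, ← g1 p (by omega)]
        exact hval
      · intro r h1 h2
        rw [← g1 r (by omega), ← g1 p (by omega)]
        exact hint r h1 h2
    · rcases Nat.lt_or_ge p (winv u).length with hcase2 | hcase2
      · -- straddle: p < n ≤ q
        set n := (winv u).length with hn
        set c := (winv u ++ v)[p]'(by omega) with hc
        set j := q - n with hj
        have hjv : j < v.length := by
          have := hWlen
          simp only [hn] at *
          omega
        -- v-side
        have gv : v[j]'hjv = linv c := by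
          rw [← hval]
          rw [List.getElem_append_right (by omega)]
        have hcommv : ∀ b ∈ v.take j, lcomm F (linv c) b := by
          intro b hb
          obtain ⟨i, hi2, hij, hbe⟩ := mem_take_idx hb
          have e1 : (winv u ++ v)[n + i]'(by simp only [List.length_append]; omega) = b := by
            rw [List.getElem_append_right (by omega)]
            simp only [hn]
            simpa [Nat.add_sub_cancel_left] using hbe
          have := hint (n + i) (by omega) (by omega)
          rw [e1] at this
          simpa using this
        have hvdec : v = v.take j ++ linv c :: v.drop (j+1) := by
          conv_lhs => rw [← List.take_append_drop j v]
          rw [List.drop_eq_getElem_cons hjv, gv]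
        have hshz : Shuf F v (linv c :: (v.take j ++ v.drop (j+1))) := by
          conv_lhs => rw [hvdec]
          exact shuf_move_front hcommv
        have hFLz : FirstLetter (linv c) z :=
          ⟨v.take j ++ v.drop (j+1), hshz.red hv, by rw [← shuf_wordProd hshz, hvw]⟩
        -- u-side
        have hpA : p < n := hcase2
        have gA : (winv u)[p]'hpA = c := by
          rw [hc]
          exact (List.getElem_append_left hpA).symm
        have hcommA : ∀ b ∈ (winv u).drop (p+1), lcomm F c b := by
          intro b hb
          obtain ⟨i, hi2, hij, hbe⟩ := mem_drop_idx hb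
          have e1 : (winv u ++ v)[i]'(by simp only [List.length_append]; omega) = b := by
            rw [List.getElem_append_left hi2]
            exact hbe
          have := hint i (by omega) (by omega)
          rw [e1] at this
          exact this
        have hAdec : winv u = (winv u).take p ++ c :: (winv u).drop (p+1) := by
          conv_lhs => rw [← List.take_append_drop p (winv u)]
          rw [List.drop_eq_getElem_cons hpA, gA]
        have hudec : u = winv ((winv u).drop (p+1)) ++ linv c :: winv ((winv u).take p) := by
          conv_lhs => rw [← winv_winv u, hAdec]
          rw [winv_append, winv_cons]
          simp
        have hcommU : ∀ b ∈ winv ((winv u).drop (p+1)), lcomm F (linv c) b := by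
          intro b hb
          simp only [winv, List.mem_reverse, List.mem_map] at hb
          obtain ⟨d, hd, rfl⟩ := hb
          simpa using hcommA d hd
        have hshy : Shuf F u
            (linv c :: (winv ((winv u).drop (p+1)) ++ winv ((winv u).take p))) := by
          conv_lhs => rw [hudec]
          exact shuf_move_front hcommU
        have hFLy : FirstLetter (linv c) y :=
          ⟨_, hshy.red hu, by rw [← shuf_wordProd hshy, huw]⟩
        exact h (linv c) ⟨hFLy, hFLz⟩
      · -- pair inside v
        apply hv
        apply locrp_of_prp
        have g2 : ∀ i (hi : (winv u).length ≤ i) (hi2 : i < (winv u ++ v).length),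
            (winv u ++ v)[i] = v[i - (winv u).length]'(by simp at hi2; omega) :=
          fun i hi hi2 => List.getElem_append_right hi
        have hqv : q - (winv u).length < v.length := by
          simp only [List.length_append] at hq ⊢
          omega
        refine ⟨p - (winv u).length, q - (winv u).length, by omega, hqv, ?_, ?_⟩
        · rw [← g2 q (by omega) hq, ← g2 p (by omega) (by omega)]
          exact hval
        · intro r h1 h2
          have hrv : r < v.length := by omega
          have g3 : v[r]'hrv = (winv u ++ v)[(winv u).length + r]'(by
              simp only [List.length_append] at hq ⊢; omega) := by
            rw [List.getElem_append_right (by omega)]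
            first
            | simp only [Nat.add_sub_cancel_left]
            | (congr 1; omega)
          rw [← g2 p (by omega) (by omega), g3]
          exact hint ((winv u).length + r) (by omega) (by omega)

/-- existence of medians (based at 1) -/
lemma median_one (y z : Grp k F) :
    ∃ m : Grp k F, len m + len (m⁻¹ * y) = len y ∧ len m + len (m⁻¹ * z) = len z ∧
      len (y⁻¹ * m) + len (m⁻¹ * z) = len (y⁻¹ * z) := by
  generalize hN : len y + len z = N
  induction N using Nat.strong_induction_on generalizing y z with
  | _ N ih =>
    by_cases hcom : ∃ a, FirstLetter a y ∧ FirstLetter a z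
    · obtain ⟨a, hay, haz⟩ := hcom
      have hy1 := firstLetter_len hay
      have hz1 := firstLetter_len haz
      set y' := (sym k F a)⁻¹ * y with hy'
      set z' := (sym k F a)⁻¹ * z with hz'
      have hlt : len y' + len z' < N := by omega
      obtain ⟨m', hm1, hm2, hm3⟩ := ih (len y' + len z') hlt y' z' rfl
      refine ⟨sym k F a * m', ?_, ?_, ?_⟩
      · have e1 : (sym k F a * m')⁻¹ * y = m'⁻¹ * y' := by rw [hy']; group
        have e2 : len (sym k F a * m') ≤ 1 + len m' := by
          have := len_mul_le (sym k F a) m'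
          have := len_sym_le (F := F) a
          omega
        have e3 : len y ≤ len (sym k F a * m') + len ((sym k F a * m')⁻¹ * y) := by
          have h9 := len_mul_le (sym k F a * m') ((sym k F a * m')⁻¹ * y)
          rw [mul_inv_cancel_left] at h9
          exact h9
        rw [e1] at e3 ⊢
        omega
      · have e1 : (sym k F a * m')⁻¹ * z = m'⁻¹ * z' := by rw [hz']; group
        have e2 : len (sym k F a * m') ≤ 1 + len m' := by
          have := len_mul_le (sym k F a) m'
          have := len_sym_le (F := F) a
          omega
        have e3 : len z ≤ len (sym k F a * m') + len ((sym k F a * m')⁻¹ * z) := by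
          have h9 := len_mul_le (sym k F a * m') ((sym k F a * m')⁻¹ * z)
          rw [mul_inv_cancel_left] at h9
          exact h9
        rw [e1] at e3 ⊢
        omega
      · have e1 : y⁻¹ * (sym k F a * m') = y'⁻¹ * m' := by rw [hy']; group
        have e2 : (sym k F a * m')⁻¹ * z = m'⁻¹ * z' := by rw [hz']; group
        have e3 : y⁻¹ * z = y'⁻¹ * z' := by rw [hy', hz']; group
        rw [e1, e2, e3]
        exact hm3
    · push_neg at hcom
      refine ⟨1, ?_, ?_, ?_⟩
      · simp [len_one]
      · simp [len_one]
      · simp only [mul_one, inv_one, one_mul]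
        rw [len_inv]
        exact (no_common_first (fun a ⟨h1, h2⟩ => hcom a h1 h2)).symm

/-- existence of medians -/
lemma median (x y z : Grp k F) :
    ∃ m : Grp k F, dist x m + dist m y = dist x y ∧ dist x m + dist m z = dist x z ∧
      dist y m + dist m z = dist y z := by
  obtain ⟨m₀, h1, h2, h3⟩ := median_one (x⁻¹ * y) (x⁻¹ * z)
  refine ⟨x * m₀, ?_, ?_, ?_⟩
  · have e1 : (x * m₀)⁻¹ * y = m₀⁻¹ * (x⁻¹ * y) := by group
    have e2 : x⁻¹ * (x * m₀) = m₀ := by group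
    simp only [dist, e1, e2]
    exact h1
  · have e1 : (x * m₀)⁻¹ * z = m₀⁻¹ * (x⁻¹ * z) := by group
    have e2 : x⁻¹ * (x * m₀) = m₀ := by group
    simp only [dist, e1, e2]
    exact h2
  · have e1 : (x * m₀)⁻¹ * z = m₀⁻¹ * (x⁻¹ * z) := by group
    have e2 : y⁻¹ * (x * m₀) = (x⁻¹ * y)⁻¹ * m₀ := by group
    have e3 : y⁻¹ * z = (x⁻¹ * y)⁻¹ * (x⁻¹ * z) := by group
    simp only [dist, e1, e2, e3]
    exact h3

/-- for convex `L₁, L₂, L₃` with `L₁ ∩ L₂ ≠ ∅`,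
`L₁L₃⁻¹ ∩ L₂L₃⁻¹ = (L₁ ∩ L₂)L₃⁻¹`. -/
theorem stmt8 {k : ℕ} (hk : 1 ≤ k) {F : Set (Sym2 (Fin k))}
    (L₁ L₂ L₃ : Set (Grp k F))
    (h1 : ConvexSet L₁) (h2 : ConvexSet L₂) (h3 : ConvexSet L₃)
    (h12 : (L₁ ∩ L₂).Nonempty) :
    (L₁ * L₃⁻¹) ∩ (L₂ * L₃⁻¹) = (L₁ ∩ L₂) * L₃⁻¹ := by
  ext g
  constructor
  · rintro ⟨hg1, hg2⟩
    rw [Set.mem_mul] at hg1 hg2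
    obtain ⟨a, ha, e, he, hae⟩ := hg1
    obtain ⟨b, hb, f, hf, hbf⟩ := hg2
    rw [Set.mem_inv] at he hf
    obtain ⟨p, hp1, hp2⟩ := h12
    obtain ⟨m, hm1, hm2, hm3⟩ := median p a b
    have hmL1 : m ∈ L₁ := h1.2 p a m hp1 ha hm1
    have hmL2 : m ∈ L₂ := h2.2 p b m hp2 hb hm2
    -- membership in the translate g L₃
    have hga : g⁻¹ * a = e⁻¹ := by rw [← hae]; group
    have hgb : g⁻¹ * b = f⁻¹ := by rw [← hbf]; group
    have haC : g⁻¹ * a ∈ L₃ := by rw [hga]; exact he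
    have hbC : g⁻¹ * b ∈ L₃ := by rw [hgb]; exact hf
    have hdist : dist (g⁻¹ * a) (g⁻¹ * m) + dist (g⁻¹ * m) (g⁻¹ * b)
        = dist (g⁻¹ * a) (g⁻¹ * b) := by
      have e1 : (g⁻¹ * a)⁻¹ * (g⁻¹ * m) = a⁻¹ * m := by group
      have e2 : (g⁻¹ * m)⁻¹ * (g⁻¹ * b) = m⁻¹ * b := by group
      have e3 : (g⁻¹ * a)⁻¹ * (g⁻¹ * b) = a⁻¹ * b := by group
      simp only [dist, e1, e2, e3]
      exact hm3
    have hmC : g⁻¹ * m ∈ L₃ := h3.2 (g⁻¹ * a) (g⁻¹ * b) (g⁻¹ * m) haC hbC hdist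
    rw [Set.mem_mul]
    refine ⟨m, ⟨hmL1, hmL2⟩, m⁻¹ * g, ?_, by group⟩
    rw [Set.mem_inv]
    have : (m⁻¹ * g)⁻¹ = g⁻¹ * m := by group
    rw [this]
    exact hmC
  · rintro hg
    rw [Set.mem_mul] at hg
    obtain ⟨x, hx, t, ht, hxt⟩ := hg
    exact ⟨Set.mem_mul.2 ⟨x, hx.1, t, ht, hxt⟩, Set.mem_mul.2 ⟨x, hx.2, t, ht, hxt⟩⟩


end GraphGroupPaper
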